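/- arXiv:1804.08650 — 2 statements merged into one kernel-verified Lean document; each statement's English description precedes it below -/
import Mathlib

section
/- Bandwidth equivalence under the modified Cholesky decomposition: let Ω = (I_p − A)ᵀ D⁻¹ (I_p − A), where A = (a_{jl}) is a p×p lower triangular matrix with zero diagonal and D is diagonal with strictly positive diagonal entries. Then for every integer k ≥ 0: a_{jl} = 0 for all pairs (j,l) with j − l > k if and only if Ω_{jl} = 0 for all pairs (j,l) with |j − l| > k. In particular, the bandwidth of A equals the bandwidth of Ω. -/
open Matrix

/-- **Bandwidth equivalence under the modified Cholesky decomposition.** If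
`Ω = (I - A)ᵀ D⁻¹ (I - A)` with `A` lower triangular with zero diagonal and `D` diagonal with
positive entries, then for every `k ≥ 0` the Cholesky factor `A` has bandwidth at most `k`
(`a_{jl} = 0` whenever `j - l > k`) if and only if `Ω` has bandwidth at most `k`
(`Ω_{jl} = 0` whenever `|j - l| > k`). -/
theorem bandwidth_cholesky_iff (p : ℕ) (A D Ω : Matrix (Fin p) (Fin p) ℝ)
    (hA : ∀ j l : Fin p, j ≤ l → A j l = 0)
    (hDdiag : ∀ j l : Fin p, j ≠ l → D j l = 0)
    (hDpos : ∀ j : Fin p, 0 < D j j)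
    (hΩ : Ω = (1 - A)ᵀ * D⁻¹ * (1 - A)) :
    ∀ k : ℕ,
      (∀ j l : Fin p, l.val + k < j.val → A j l = 0) ↔
      (∀ j l : Fin p, l.val + k < j.val ∨ j.val + k < l.val → Ω j l = 0) := by
  have hDdiagonal : D = Matrix.diagonal (fun j => D j j) := by
    ext j l
    by_cases h : j = l
    · subst h; simp
    · simp [Matrix.diagonal_apply_ne _ h, hDdiag j l h]
  have hDinv : D⁻¹ = Matrix.diagonal (fun j => (D j j)⁻¹) := by
    apply Matrix.inv_eq_right_inv
    ext a b
    rw [Matrix.mul_diagonal]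
    rcases eq_or_ne a b with rfl | h
    · simp [mul_inv_cancel₀ (hDpos a).ne']
    · simp [hDdiag a b h, Matrix.one_apply_ne h]
  set B : Matrix (Fin p) (Fin p) ℝ := 1 - A with hB
  have hBlow : ∀ m j : Fin p, m ≠ j → B m j = -A m j := by
    intro m j h; simp [hB, Matrix.one_apply_ne h]
  have hBzero : ∀ m j : Fin p, m < j → B m j = 0 := by
    intro m j h
    rw [hBlow m j (ne_of_lt h), hA m j h.le, neg_zero]
  have hBdiag : ∀ j : Fin p, B j j = 1 := by intro j; simp [hB, hA j j le_rfl]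
  have hΩapp : ∀ j l : Fin p, Ω j l = ∑ m, B m j * (D m m)⁻¹ * B m l := by
    intro j l
    rw [hΩ, hDinv, Matrix.mul_apply]
    simp only [Matrix.mul_diagonal, Matrix.transpose_apply, hB]
  intro k
  constructor
  · intro hAk j l hjl
    rw [hΩapp]
    apply Finset.sum_eq_zero
    intro m _
    rcases hjl with h | h
    · rcases lt_or_ge m.val j.val with hm | hm
      · rw [hBzero m j (Fin.lt_def.mpr hm)]; ring
      · have hml : m ≠ l := Fin.ne_of_val_ne (by omega)
        rw [hBlow m l hml, hAk m l (by omega)]; ring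
    · rcases lt_or_ge m.val l.val with hm | hm
      · rw [hBzero m l (Fin.lt_def.mpr hm)]; ring
      · have hmj : m ≠ j := Fin.ne_of_val_ne (by omega)
        rw [hBlow m j hmj, hAk m j (by omega)]; ring
  · intro hΩk
    have main : ∀ n : ℕ, ∀ j : Fin p, p - j.val ≤ n →
        ∀ l : Fin p, l.val + k < j.val → A j l = 0 := by
      intro n
      induction n with
      | zero => intro j hj; have := j.isLt; omega
      | succ n ih =>
        intro j hj l hl
        have hΩ0 : Ω j l = 0 := hΩk j l (Or.inl hl)
        rw [hΩapp] at hΩ0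
        have hsum : (∑ m, B m j * (D m m)⁻¹ * B m l) = B j j * (D j j)⁻¹ * B j l := by
          apply Finset.sum_eq_single
          · intro m _ hm
            rcases lt_trichotomy m.val j.val with h | h | h
            · rw [hBzero m j (Fin.lt_def.mpr h)]; ring
            · exact absurd (Fin.ext h) hm
            · have hA0 : A m l = 0 := ih m (by omega) l (by omega)
              have hml : m ≠ l := Fin.ne_of_val_ne (by omega)
              rw [hBlow m l hml, hA0]; ring
          · intro h; exact absurd (Finset.mem_univ j) h
        rw [hsum, hBdiag, hBlow j l (Fin.ne_of_val_ne (by omega))] at hΩ0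
        have hd := (hDpos j).ne'
        have : (D j j)⁻¹ ≠ 0 := inv_ne_zero hd
        have := hΩ0
        field_simp at this
        linarith [this]
    intro j l hl
    exact main p j (by omega) l hl
end

section
/- Closed form of the marginal likelihood under the Zellner-type prior: let n > k ≥ 1 be integers, X ∈ ℝ^{n×k} a matrix of rank k, and y ∈ ℝⁿ a vector not lying in the column space of X. Let â = (XᵀX)⁻¹Xᵀy and d̂ = yᵀ(I_n − X(XᵀX)⁻¹Xᵀ)y / n (so d̂ > 0), and let γ > 0 and τ ∈ (0,1). Then ∫₀^∞ d^{τn/2 − 1} [ ∫_{ℝᵏ} (2πd)^{−n/2} exp(−‖y − Xa‖²/(2d)) · (2πd/γ)^{−k/2} det(XᵀX)^{1/2} exp(−(γ/(2d)) (a − â)ᵀ XᵀX (a − â)) da ] dd = (2π)^{−n/2} (1 + 1/γ)^{−k/2} Γ((1−τ)n/2) (n d̂ / 2)^{−(1−τ)n/2}, where Γ denotes the Gamma function and both integrals are with respect to Lebesgue measure. -/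
open MeasureTheory Matrix Real Set

noncomputable section

private lemma zellner_aux_L4 {s b : ℝ} (hs : 0 < s) (hb : 0 < b) :
    ∫ x in Ioi (0:ℝ), x ^ (-s - 1) * Real.exp (-(b / x)) = Real.Gamma s * b ^ (-s) := by
  have h := MeasureTheory.integral_comp_rpow_Ioi
    (fun y => y ^ (s - 1) * Real.exp (-(b * y))) (p := (-1:ℝ)) (by norm_num)
  have h2 : ∫ (y : ℝ) in Ioi 0, y ^ (s - 1) * rexp (-(b * y)) = (1/b) ^ s * Real.Gamma s :=
    integral_rpow_mul_exp_neg_mul_Ioi hs hb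
  have h3 : ∀ x ∈ Ioi (0:ℝ),
      (|(-1:ℝ)| * x ^ (-1 - 1 : ℝ)) • ((x ^ (-1:ℝ)) ^ (s - 1) * rexp (-(b * x ^ (-1:ℝ))))
        = x ^ (-s - 1) * rexp (-(b / x)) := by
    intro x hx
    have hx0 : (0:ℝ) < x := hx
    rw [abs_neg, abs_one, one_mul, smul_eq_mul, ← Real.rpow_mul hx0.le, ← mul_assoc,
      ← Real.rpow_add hx0, Real.rpow_neg_one, ← div_eq_mul_inv]
    norm_num
    ring_nf
  rw [setIntegral_congr_fun measurableSet_Ioi h3] at h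
  rw [h, h2, one_div, Real.inv_rpow hb.le, ← Real.rpow_neg hb.le, mul_comm]

private lemma zellner_aux_gauss_std {k : ℕ} {c : ℝ} (hc : 0 < c) :
    ∫ q : Fin k → ℝ, Real.exp (-(c * ∑ i, q i ^ 2)) = (π / c) ^ ((k:ℝ) / 2) := by
  have hmp := (EuclideanSpace.volume_preserving_symm_measurableEquiv_toLp (Fin k)).symm
  have h1 : ∀ q : Fin k → ℝ, Real.exp (-(c * ∑ i, q i ^ 2)) =
      (fun v : EuclideanSpace ℝ (Fin k) => Real.exp (-c * ‖v‖ ^ 2))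
        (MeasurableEquiv.toLp 2 (Fin k → ℝ) q) := by
    intro q
    simp only [neg_mul]
    congr 2
    rw [EuclideanSpace.norm_eq, Real.sq_sqrt (by positivity)]
    simp [Real.norm_eq_abs, sq_abs]
  calc ∫ q : Fin k → ℝ, Real.exp (-(c * ∑ i, q i ^ 2))
      = ∫ q : Fin k → ℝ, (fun v : EuclideanSpace ℝ (Fin k) => Real.exp (-c * ‖v‖ ^ 2))
          (MeasurableEquiv.toLp 2 (Fin k → ℝ) q) :=
        integral_congr_ae (Filter.Eventually.of_forall h1)
    _ = ∫ v : EuclideanSpace ℝ (Fin k), Real.exp (-c * ‖v‖ ^ 2) :=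
        hmp.integral_comp (MeasurableEquiv.measurableEmbedding _)
          (fun v => Real.exp (-c * ‖v‖ ^ 2))
    _ = (π / c) ^ ((k:ℝ) / 2) := by
        rw [GaussianFourier.integral_rexp_neg_mul_sq_norm hc]
        simp

open scoped MatrixOrder in
private lemma zellner_aux_gauss_quad {k : ℕ} (S : Matrix (Fin k) (Fin k) ℝ) (hS : S.PosDef)
    {c : ℝ} (hc : 0 < c) :
    ∫ q : Fin k → ℝ, Real.exp (-(c * (q ⬝ᵥ S *ᵥ q)))
      = (π / c) ^ ((k:ℝ) / 2) / Real.sqrt S.det := by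
  set T := CFC.sqrt S with hTdef
  have hT : T.PosSemidef := (CFC.sqrt_nonneg S).posSemidef
  have hTT : T * T = S := CFC.sqrt_mul_sqrt_self S hS.posSemidef.nonneg
  have hTsym : Tᵀ = T := by
    have := hT.1
    rwa [Matrix.IsHermitian, conjTranspose_eq_transpose_of_trivial] at this
  have hdet2 : T.det * T.det = S.det := by rw [← Matrix.det_mul, hTT]
  have hSdet : 0 < S.det := hS.det_pos
  have hTdet0 : T.det ≠ 0 := by
    intro h; rw [h, mul_zero] at hdet2; exact hSdet.ne' hdet2.symm
  have habs : |T.det| = Real.sqrt S.det := by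
    rw [← hdet2, ← sq, Real.sqrt_sq_eq_abs]
  have hquad : ∀ q : Fin k → ℝ, q ⬝ᵥ S *ᵥ q = ∑ i, (T *ᵥ q) i ^ 2 := by
    intro q
    have h1 : q ⬝ᵥ S *ᵥ q = (T *ᵥ q) ⬝ᵥ (T *ᵥ q) := by
      rw [← hTT, ← Matrix.mulVec_mulVec, Matrix.dotProduct_mulVec]
      rw [← hTsym, Matrix.vecMul_transpose, hTsym]
    rw [h1]
    simp [dotProduct, sq]
  set φ : (Fin k → ℝ) →ₗ[ℝ] (Fin k → ℝ) := Matrix.toLin' T with hφdef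
  have hφdet : LinearMap.det φ = T.det := LinearMap.det_toLin' T
  have hmap : Measure.map φ volume = ENNReal.ofReal |(T.det)⁻¹| • volume := by
    rw [← hφdet]
    exact Measure.map_linearMap_addHaar_eq_smul_addHaar volume (by rw [hφdet]; exact hTdet0)
  have hg : Continuous (fun y : Fin k → ℝ => Real.exp (-(c * ∑ i, y i ^ 2))) := by
    fun_prop
  have hint : ∫ q : Fin k → ℝ, Real.exp (-(c * (q ⬝ᵥ S *ᵥ q)))
      = ∫ q : Fin k → ℝ, Real.exp (-(c * ∑ i, (φ q) i ^ 2)) := by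
    refine integral_congr_ae (Filter.Eventually.of_forall fun q => ?_)
    dsimp only
    rw [hquad q]
    simp only [hφdef, Matrix.toLin'_apply]
  rw [hint]
  have := integral_map (f := fun y : Fin k → ℝ => Real.exp (-(c * ∑ i, y i ^ 2)))
    (φ := fun q => φ q) (μ := volume)
    (φ.continuous_of_finiteDimensional.aemeasurable)
    (hg.aestronglyMeasurable)
  rw [← this, hmap, integral_smul_measure, zellner_aux_gauss_std hc]
  rw [ENNReal.toReal_ofReal (abs_nonneg _), abs_inv, habs, smul_eq_mul, inv_mul_eq_div]

/-- **Closed form of the marginal likelihood under the Zellner-type prior.** For a design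
matrix `X ∈ ℝ^{n×k}` of full column rank and a response `y` outside the column space of `X`,
with `â = (XᵀX)⁻¹Xᵀy` and `d̂ = yᵀ(I - X(XᵀX)⁻¹Xᵀ)y/n`,
`∫₀^∞ d^{τn/2-1} ∫ N_n(Xa, dI)(y) ⋅ N_k(â, (d/γ)(XᵀX)⁻¹)(a) da dd
  = (2π)^{-n/2} (1+1/γ)^{-k/2} Γ((1-τ)n/2) (n d̂/2)^{-(1-τ)n/2}`. -/
theorem zellner_marginal_likelihood (n k : ℕ) (hk : 1 ≤ k) (hkn : k < n)
    (X : Matrix (Fin n) (Fin k) ℝ) (hX : X.rank = k)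
    (y : Fin n → ℝ) (hy : ∀ a : Fin k → ℝ, y ≠ X *ᵥ a)
    (γ τ : ℝ) (hγ : 0 < γ) (hτ0 : 0 < τ) (hτ1 : τ < 1) :
    (∫ d in Set.Ioi (0 : ℝ), d ^ (τ * (n : ℝ) / 2 - 1) *
      ∫ a : Fin k → ℝ,
        (2 * π * d) ^ (-(n : ℝ) / 2) *
          Real.exp (-(∑ i, (y i - (X *ᵥ a) i) ^ 2) / (2 * d)) *
        ((2 * π * d / γ) ^ (-(k : ℝ) / 2) * Real.sqrt (Xᵀ * X).det *
          Real.exp (-(γ / (2 * d)) *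
            ((fun i => a i - ((Xᵀ * X)⁻¹ *ᵥ (Xᵀ *ᵥ y)) i) ⬝ᵥ
              ((Xᵀ * X) *ᵥ fun i => a i - ((Xᵀ * X)⁻¹ *ᵥ (Xᵀ *ᵥ y)) i))))) =
    (2 * π) ^ (-(n : ℝ) / 2) * (1 + 1 / γ) ^ (-(k : ℝ) / 2) *
      Real.Gamma ((1 - τ) * (n : ℝ) / 2) *
      ((n : ℝ) * ((y ⬝ᵥ y - (Xᵀ *ᵥ y) ⬝ᵥ ((Xᵀ * X)⁻¹ *ᵥ (Xᵀ *ᵥ y))) / (n : ℝ)) / 2) ^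
        (-((1 - τ) * (n : ℝ)) / 2) := by
  have hn : 0 < n := lt_trans (Nat.lt_of_lt_of_le Nat.zero_lt_one hk) hkn
  have hn0 : (0:ℝ) < (n:ℝ) := by exact_mod_cast hn
  have hπ : (0:ℝ) < π := Real.pi_pos
  set S : Matrix (Fin k) (Fin k) ℝ := Xᵀ * X with hSdef
  set ahat : Fin k → ℝ := S⁻¹ *ᵥ (Xᵀ *ᵥ y) with hahatdef
  set R : ℝ := y ⬝ᵥ y - (Xᵀ *ᵥ y) ⬝ᵥ ahat with hRdef
  -- injectivity of X
  have hXinj : ∀ v : Fin k → ℝ, X *ᵥ v = 0 → v = 0 := by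
    have hrn := LinearMap.finrank_range_add_finrank_ker X.mulVecLin
    rw [show Module.finrank ℝ (LinearMap.range X.mulVecLin) = X.rank from rfl, hX,
      Module.finrank_fin_fun (R := ℝ)] at hrn
    have hker : Module.finrank ℝ (LinearMap.ker X.mulVecLin) = 0 := by omega
    rw [Submodule.finrank_eq_zero] at hker
    intro v hv
    have : v ∈ LinearMap.ker X.mulVecLin := by
      simpa [Matrix.mulVecLin] using hv
    rw [hker] at this
    simpa using this
  -- S is positive definite
  have hSsym : Sᵀ = S := by
    rw [hSdef, Matrix.transpose_mul, Matrix.transpose_transpose]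
  have hSpd : S.PosDef := by
    refine Matrix.PosDef.of_dotProduct_mulVec_pos ?_ ?_
    · rw [Matrix.IsHermitian, conjTranspose_eq_transpose_of_trivial, hSsym]
    · intro x hx
      have h1 : star x ⬝ᵥ S *ᵥ x = (X *ᵥ x) ⬝ᵥ (X *ᵥ x) := by
        rw [show star x = x from rfl, hSdef, ← Matrix.mulVec_mulVec,
          Matrix.dotProduct_mulVec, Matrix.vecMul_transpose]
      rw [h1]
      have hXx : X *ᵥ x ≠ 0 := fun h => hx (hXinj x h)
      obtain ⟨i, hi⟩ : ∃ i, (X *ᵥ x) i ≠ 0 := by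
        by_contra h; push_neg at h; exact hXx (funext h)
      refine Finset.sum_pos' (fun j _ => mul_self_nonneg _) ⟨i, Finset.mem_univ i, ?_⟩
      exact lt_of_le_of_ne (mul_self_nonneg _) (Ne.symm (mul_ne_zero hi hi))
  have hSdetpos : 0 < S.det := hSpd.det_pos
  have hsd0 : Real.sqrt S.det ≠ 0 := (Real.sqrt_pos.mpr hSdetpos).ne'
  have hSinv : S * S⁻¹ = 1 := Matrix.mul_nonsing_inv S hSdetpos.ne'.isUnit
  have hSahat : S *ᵥ ahat = Xᵀ *ᵥ y := by
    rw [hahatdef, Matrix.mulVec_mulVec, hSinv, Matrix.one_mulVec]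
  have hdotX : ∀ (u : Fin n → ℝ) (a : Fin k → ℝ), u ⬝ᵥ (X *ᵥ a) = (Xᵀ *ᵥ u) ⬝ᵥ a := by
    intro u a
    rw [Matrix.dotProduct_mulVec]
    nth_rewrite 1 [← Matrix.transpose_transpose X]
    rw [Matrix.vecMul_transpose]
  have hsymdot : ∀ a b : Fin k → ℝ, a ⬝ᵥ (S *ᵥ b) = (S *ᵥ a) ⬝ᵥ b := by
    intro a b
    rw [Matrix.dotProduct_mulVec]
    nth_rewrite 1 [← hSsym]
    rw [Matrix.vecMul_transpose]
  have expand : ∀ u v : Fin n → ℝ,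
      ∑ i, (u i - v i)^2 = u ⬝ᵥ u - 2*(u ⬝ᵥ v) + v ⬝ᵥ v := by
    intro u v
    simp only [dotProduct, Finset.mul_sum, ← Finset.sum_add_distrib,
      ← Finset.sum_sub_distrib]
    exact Finset.sum_congr rfl fun i _ => by ring
  have hXaXa : ∀ a : Fin k → ℝ, (X *ᵥ a) ⬝ᵥ (X *ᵥ a) = a ⬝ᵥ (S *ᵥ a) := by
    intro a
    rw [hdotX (X *ᵥ a) a, Matrix.mulVec_mulVec, ← hSdef, ← hsymdot, dotProduct_comm]
  have key : ∀ a : Fin k → ℝ, ∑ i, (y i - (X *ᵥ a) i)^2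
      = R + ((a - ahat) ⬝ᵥ S *ᵥ (a - ahat)) := by
    intro a
    rw [expand, hdotX y a, hXaXa]
    have h2 : (a - ahat) ⬝ᵥ S *ᵥ (a - ahat)
        = a ⬝ᵥ (S *ᵥ a) - (Xᵀ *ᵥ y) ⬝ᵥ a - (Xᵀ *ᵥ y) ⬝ᵥ a + (Xᵀ *ᵥ y) ⬝ᵥ ahat := by
      rw [Matrix.mulVec_sub, hSahat, dotProduct_sub, sub_dotProduct,
        sub_dotProduct, hsymdot ahat a, hSahat,
        dotProduct_comm a (Xᵀ *ᵥ y), dotProduct_comm ahat (Xᵀ *ᵥ y)]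
      ring
    rw [h2, hRdef]
    ring
  have hR : 0 < R := by
    have h0 := key ahat
    rw [sub_self, zero_dotProduct, add_zero] at h0
    obtain ⟨i, hi⟩ : ∃ i, y i - (X *ᵥ ahat) i ≠ 0 := by
      by_contra h; push_neg at h
      exact hy ahat (funext fun i => by have := h i; linarith)
    have hpos : 0 < ∑ i, (y i - (X *ᵥ ahat) i)^2 :=
      Finset.sum_pos' (fun j _ => sq_nonneg _)
        ⟨i, Finset.mem_univ i, lt_of_le_of_ne (sq_nonneg _) (Ne.symm (pow_ne_zero 2 hi))⟩
    rwa [h0] at hpos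
  set s : ℝ := (1 - τ) * (n:ℝ) / 2 with hsdef
  have hs : 0 < s := by
    apply div_pos (mul_pos (by linarith) hn0) two_pos
  set C : ℝ := (2*π) ^ (-(n:ℝ)/2) * (1 + 1/γ) ^ (-(k:ℝ)/2) with hCdef
  have hγ1 : (0:ℝ) < 1 + γ := by linarith
  have hγ2 : (0:ℝ) < 1 + 1/γ := by positivity
  -- the outer pointwise identity
  have houter : ∀ d ∈ Ioi (0:ℝ), d ^ (τ * (n : ℝ) / 2 - 1) *
      (∫ a : Fin k → ℝ,
        (2 * π * d) ^ (-(n : ℝ) / 2) *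
          Real.exp (-(∑ i, (y i - (X *ᵥ a) i) ^ 2) / (2 * d)) *
        ((2 * π * d / γ) ^ (-(k : ℝ) / 2) * Real.sqrt S.det *
          Real.exp (-(γ / (2 * d)) *
            ((fun i => a i - ahat i) ⬝ᵥ (S *ᵥ fun i => a i - ahat i)))))
      = C * (d ^ (-s - 1) * Real.exp (-(R/2 / d))) := by
    intro d hd
    have hd0 : (0:ℝ) < d := hd
    set c : ℝ := (1 + γ) / (2 * d) with hcdef
    have hc : 0 < c := by positivity
    set K : ℝ := (2*π*d) ^ (-(n:ℝ)/2) * Real.exp (-(R/(2*d))) *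
      ((2*π*d/γ) ^ (-(k:ℝ)/2) * Real.sqrt S.det) with hKdef
    have hintegrand : ∀ a : Fin k → ℝ,
        (2 * π * d) ^ (-(n : ℝ) / 2) *
          Real.exp (-(∑ i, (y i - (X *ᵥ a) i) ^ 2) / (2 * d)) *
        ((2 * π * d / γ) ^ (-(k : ℝ) / 2) * Real.sqrt S.det *
          Real.exp (-(γ / (2 * d)) *
            ((fun i => a i - ahat i) ⬝ᵥ (S *ᵥ fun i => a i - ahat i))))
        = K * Real.exp (-(c * ((a - ahat) ⬝ᵥ S *ᵥ (a - ahat)))) := by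
      intro a
      have hfa : (fun i => a i - ahat i) = a - ahat := rfl
      rw [hfa, key a]
      set Q : ℝ := (a - ahat) ⬝ᵥ S *ᵥ (a - ahat) with hQdef
      have e12 : Real.exp (-(R + Q) / (2*d)) * Real.exp (-(γ/(2*d)) * Q)
          = Real.exp (-(R/(2*d))) * Real.exp (-(c * Q)) := by
        rw [← Real.exp_add, ← Real.exp_add]
        congr 1
        rw [hcdef]
        field_simp
        ring
      calc (2*π*d) ^ (-(n:ℝ)/2) * Real.exp (-(R + Q) / (2*d)) *
            ((2*π*d/γ) ^ (-(k:ℝ)/2) * Real.sqrt S.det * Real.exp (-(γ/(2*d)) * Q))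
          = (2*π*d) ^ (-(n:ℝ)/2) * ((2*π*d/γ) ^ (-(k:ℝ)/2) * Real.sqrt S.det) *
            (Real.exp (-(R + Q) / (2*d)) * Real.exp (-(γ/(2*d)) * Q)) := by ring
        _ = (2*π*d) ^ (-(n:ℝ)/2) * ((2*π*d/γ) ^ (-(k:ℝ)/2) * Real.sqrt S.det) *
            (Real.exp (-(R/(2*d))) * Real.exp (-(c * Q))) := by rw [e12]
        _ = K * Real.exp (-(c * Q)) := by rw [hKdef]; ring
    rw [integral_congr_ae (Filter.Eventually.of_forall hintegrand), integral_const_mul _ _]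
    have htrans : ∫ a : Fin k → ℝ, Real.exp (-(c * ((a - ahat) ⬝ᵥ S *ᵥ (a - ahat))))
        = ∫ q : Fin k → ℝ, Real.exp (-(c * (q ⬝ᵥ S *ᵥ q))) :=
      integral_sub_right_eq_self (fun q => Real.exp (-(c * (q ⬝ᵥ S *ᵥ q)))) ahat
    rw [htrans, zellner_aux_gauss_quad S hSpd hc]
    -- now pure constant manipulation
    have f1 : (2*π*d) ^ (-(n:ℝ)/2) = (2*π) ^ (-(n:ℝ)/2) * d ^ (-(n:ℝ)/2) := by
      rw [← Real.mul_rpow (by positivity) hd0.le]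
    have f2 : (π/c) ^ ((k:ℝ)/2) = (2*π*d/(1+γ)) ^ ((k:ℝ)/2) := by
      congr 1
      rw [hcdef]
      field_simp
    have f3 : (2*π*d/γ) ^ (-(k:ℝ)/2) * (2*π*d/(1+γ)) ^ ((k:ℝ)/2)
        = (1 + 1/γ) ^ (-(k:ℝ)/2) := by
      have hb1 : (0:ℝ) < 2*π*d/γ := by positivity
      have hb2 : (0:ℝ) < 2*π*d/(1+γ) := by positivity
      have hkey : (2*π*d/γ)⁻¹ * (2*π*d/(1+γ)) = (1 + 1/γ)⁻¹ := by
        rw [inv_eq_one_div, inv_eq_one_div]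
        rw [div_mul_div_comm, div_eq_div_iff (by positivity) (by positivity)]
        field_simp
        ring
      rw [neg_div, Real.rpow_neg hb1.le, ← Real.inv_rpow hb1.le,
        ← Real.mul_rpow (by positivity) hb2.le, hkey, Real.inv_rpow hγ2.le,
        ← Real.rpow_neg hγ2.le]
    have f4 : d ^ (τ * (n:ℝ)/2 - 1) * d ^ (-(n:ℝ)/2) = d ^ (-s - 1) := by
      rw [← Real.rpow_add hd0, hsdef]
      congr 1
      ring
    have f5 : Real.exp (-(R/(2*d))) = Real.exp (-(R/2 / d)) := by
      congr 1
      rw [div_div]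
    rw [hKdef, f1, f2, f5, hCdef]
    rw [div_eq_mul_inv ((2*π*d/(1+γ)) ^ ((k:ℝ)/2)) (Real.sqrt S.det)]
    calc d ^ (τ * (n:ℝ)/2 - 1) *
          ((2*π) ^ (-(n:ℝ)/2) * d ^ (-(n:ℝ)/2) * Real.exp (-(R/2/d)) *
            ((2*π*d/γ) ^ (-(k:ℝ)/2) * Real.sqrt S.det) *
            ((2*π*d/(1+γ)) ^ ((k:ℝ)/2) * (Real.sqrt S.det)⁻¹))
        = (2*π) ^ (-(n:ℝ)/2) * ((2*π*d/γ) ^ (-(k:ℝ)/2) * (2*π*d/(1+γ)) ^ ((k:ℝ)/2)) *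
            (d ^ (τ * (n:ℝ)/2 - 1) * d ^ (-(n:ℝ)/2)) * Real.exp (-(R/2/d)) *
            (Real.sqrt S.det * (Real.sqrt S.det)⁻¹) := by ring
      _ = (2*π) ^ (-(n:ℝ)/2) * (1 + 1/γ) ^ (-(k:ℝ)/2) *
            (d ^ (-s - 1) * Real.exp (-(R/2/d))) := by
          rw [f3, f4, mul_inv_cancel₀ hsd0]
          ring
  rw [setIntegral_congr_fun measurableSet_Ioi houter, integral_const_mul _ _,
    zellner_aux_L4 hs (by positivity : (0:ℝ) < R/2)]
  have hbase : (n:ℝ) * (R / (n:ℝ)) / 2 = R / 2 := by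
    field_simp
  rw [hbase]
  have hexp : -((1 - τ) * (n : ℝ)) / 2 = -s := by
    rw [hsdef]; ring
  rw [hexp, hsdef]
  ring

end
end
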